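/- arXiv:2504.15413 — 2 statements merged into one kernel-verified Lean document; each statement's English description precedes it below -/
import Mathlib

section
/- For words s of weight λ and t of weight λ' (λ a partition of m with conjugate λ'), the set G(s,t) = {w ∈ S_m : sgn_s(w·t) ≠ 0} is nonempty and is a single double coset Y_s · h · Y_t of the Young subgroups Y_s (stabilizer of s) and Y_t (stabilizer of t), for any h ∈ G(s,t). Moreover, for w = x h y with x ∈ Y_s, y ∈ Y_t one has sgn_s(w·t) = sgn(x)·sgn_s(h·t). -/
open Finset

/-- Number of inversions of a word given as a list. -/
def invCount : List ℕ → ℕ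
  | [] => 0
  | a :: l => l.countP (fun b => decide (b < a)) + invCount l

/-- Sign of a finite sequence: its permutation sign if it is a permutation of `1,…,k`
(`k` = its length), and `0` otherwise. -/
def seqSgn (l : List ℕ) : ℤ :=
  if (l : Multiset ℕ) = ((List.range' 1 l.length : List ℕ) : Multiset ℕ) then
    (-1) ^ invCount l
  else 0

/-- Positions (in increasing order) of the letter `i` in the word `s`. -/
def blockList {m : ℕ} (s : Fin m → ℕ) (i : ℕ) : List (Fin m) :=
  (List.finRange m).filter (fun p => decide (s p = i))

/-- The blockwise signature `sgn_s(σ)`: the product over the blocks of `s` of the signs of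
`σ` read along the block (in increasing position order). -/
def sgnWord {m : ℕ} (s σ : Fin m → ℕ) : ℤ :=
  ∏ i ∈ Finset.range m, seqSgn ((blockList s (i + 1)).map σ)

/-- The action of `S_m` on words of length `m` by permuting positions: `(π·t) i = t (π⁻¹ i)`. -/
def pact {m : ℕ} (π : Equiv.Perm (Fin m)) (t : Fin m → ℕ) : Fin m → ℕ :=
  fun p => t (π⁻¹ p)

/-- `w` is a word of weight `L`: the letter `i+1` occurs exactly `L.getD i 0` times. -/
def hasWeight {m : ℕ} (w : Fin m → ℕ) (L : List ℕ) : Prop :=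
  ∀ i : ℕ, (Finset.univ.filter (fun p => w p = i + 1)).card = L.getD i 0

/-- `L` is a partition of `m`. -/
def IsPartitionOf (m : ℕ) (L : List ℕ) : Prop :=
  L.Pairwise (· ≥ ·) ∧ (∀ p ∈ L, 0 < p) ∧ L.sum = m

/-- The conjugate partition, as a list: its `j`-th part is `#{i : L i ≥ j+1}`. -/
def conjList (L : List ℕ) : List ℕ :=
  (List.range (L.headD 0)).map (fun j => L.countP (fun p => decide (j + 1 ≤ p)))

/-- The inversion sign `(−1)^w` of a word. -/
def wordSign {m : ℕ} (w : Fin m → ℕ) : ℤ :=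
  (-1) ^ invCount ((List.finRange m).map w)

/-- The inversion sign `(−1)^λ` of a partition: the inversion sign of the word
`1 2 … λ₁ 1 2 … λ₂ ⋯`. -/
def partSign (L : List ℕ) : ℤ :=
  (-1) ^ invCount ((L.map (fun p => List.range' 1 p)).flatten)

/-- The Young subgroup `Y_s`: the stabilizer of the word `s` in `S_m`. -/
def Ysub {m : ℕ} (s : Fin m → ℕ) : Set (Equiv.Perm (Fin m)) := {π | pact π s = s}

/-- `G(s,t) = {π ∈ S_m : sgn_s(π·t) ≠ 0}`. -/
def Gst {m : ℕ} (s t : Fin m → ℕ) : Set (Equiv.Perm (Fin m)) :=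
  {π | sgnWord s (pact π t) ≠ 0}

lemma invCount_append (P Q : List ℕ) :
    invCount (P ++ Q) = invCount P + invCount Q
      + (P.map (fun a => Q.countP (fun b => decide (b < a)))).sum := by
  induction P with
  | nil => simp [invCount]
  | cons a P ih => simp [invCount, List.countP_append, ih]; omega

lemma parity_B {B : List ℕ} {x y : ℕ} (hx : x ∉ B) (hy : y ∉ B) :
    (B.countP (fun b => decide (b < x)) + B.countP (fun b => decide (y < b))
      + B.countP (fun b => decide (b < y)) + B.countP (fun b => decide (x < b))) % 2 = 0 := by
  induction B with
  | nil => simp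
  | cons b B ih =>
    simp only [List.mem_cons, not_or] at hx hy
    have hbx : b ≠ x := fun h => hx.1 h.symm
    have hby : b ≠ y := fun h => hy.1 h.symm
    have ih' := ih hx.2 hy.2
    simp only [List.countP_cons, decide_eq_true_eq]
    split_ifs <;> omega

lemma sum_map_add {α : Type*} (l : List α) (f g : α → ℕ) :
    (l.map (fun a => f a + g a)).sum = (l.map f).sum + (l.map g).sum := by
  induction l with
  | nil => simp
  | cons a l ih => simp [ih]; omega

lemma countP_eq_sum (l : List ℕ) (p : ℕ → Bool) :
    l.countP p = (l.map (fun b => if p b then 1 else 0)).sum := by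
  induction l with
  | nil => simp
  | cons a l ih => simp [List.countP_cons, ih]; split_ifs <;> omega

lemma perm_swap_lists (x y : ℕ) (B C : List ℕ) :
    (x :: (B ++ y :: C)).Perm (y :: (B ++ x :: C)) := by
  have h1 : (B ++ y :: C).Perm (y :: (B ++ C)) := List.perm_middle
  have h2 : (B ++ x :: C).Perm (x :: (B ++ C)) := List.perm_middle
  exact ((h1.cons x).trans (List.Perm.swap y x _)).trans ((h2.cons y).symm)

lemma invCount_odd_swap {A B C : List ℕ} {x y : ℕ} (hxy : x ≠ y) (hxB : x ∉ B) (hyB : y ∉ B) :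
    (invCount (A ++ x :: (B ++ y :: C)) + invCount (A ++ y :: (B ++ x :: C))) % 2 = 1 := by
  have hperm := perm_swap_lists x y B C
  have hcross : (fun a => (x :: (B ++ y :: C)).countP (fun b => decide (b < a)))
      = (fun a => (y :: (B ++ x :: C)).countP (fun b => decide (b < a))) :=
    funext fun a => hperm.countP_eq _
  rw [invCount_append, invCount_append, hcross]
  have e1 : invCount (x :: (B ++ y :: C))
      = B.countP (fun b => decide (b < x)) + (if y < x then 1 else 0)
        + C.countP (fun b => decide (b < x)) + invCount B + C.countP (fun b => decide (b < y))
        + invCount C + B.countP (fun b => decide (y < b))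
        + (B.map (fun b => C.countP (fun c => decide (c < b)))).sum := by
    show List.countP _ _ + invCount _ = _
    rw [invCount_append]
    have : invCount (y :: C) = C.countP (fun b => decide (b < y)) + invCount C := rfl
    simp only [List.countP_append, List.countP_cons, this, decide_eq_true_eq]
    rw [sum_map_add B (fun a => C.countP (fun b => decide (b < a))) (fun a => if y < a then 1 else 0)]
    have hs : (B.map (fun a => if y < a then (1:ℕ) else 0)).sum
        = B.countP (fun b => decide (y < b)) := by
      simp [countP_eq_sum]
    omega
  have e2 : invCount (y :: (B ++ x :: C))
      = B.countP (fun b => decide (b < y)) + (if x < y then 1 else 0)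
        + C.countP (fun b => decide (b < y)) + invCount B + C.countP (fun b => decide (b < x))
        + invCount C + B.countP (fun b => decide (x < b))
        + (B.map (fun b => C.countP (fun c => decide (c < b)))).sum := by
    show List.countP _ _ + invCount _ = _
    rw [invCount_append]
    have : invCount (x :: C) = C.countP (fun b => decide (b < x)) + invCount C := rfl
    simp only [List.countP_append, List.countP_cons, this, decide_eq_true_eq]
    rw [sum_map_add B (fun a => C.countP (fun b => decide (b < a))) (fun a => if x < a then 1 else 0)]
    have hs : (B.map (fun a => if x < a then (1:ℕ) else 0)).sum
        = B.countP (fun b => decide (x < b)) := by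
      simp [countP_eq_sum]
    omega
  rw [e1, e2]
  have hpar := parity_B hxB hyB
  have hxy' : (if y < x then 1 else 0) + (if x < y then 1 else 0) = 1 := by
    split_ifs <;> omega
  omega

lemma seqSgn_ne_zero_iff (l : List ℕ) :
    seqSgn l ≠ 0 ↔ (l : Multiset ℕ) = ((List.range' 1 l.length : List ℕ) : Multiset ℕ) := by
  unfold seqSgn
  split_ifs with h <;> simp [h]

lemma seqSgn_swap (A B C : List ℕ) {x y : ℕ} (hxy : x ≠ y) :
    seqSgn (A ++ x :: (B ++ y :: C)) = - seqSgn (A ++ y :: (B ++ x :: C)) := by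
  have hperm : (A ++ x :: (B ++ y :: C)).Perm (A ++ y :: (B ++ x :: C)) :=
    (perm_swap_lists x y B C).append_left A
  have hlen := hperm.length_eq
  have hmul : ((A ++ x :: (B ++ y :: C) : List ℕ) : Multiset ℕ)
      = ((A ++ y :: (B ++ x :: C) : List ℕ) : Multiset ℕ) := Multiset.coe_eq_coe.2 hperm
  unfold seqSgn
  rw [hmul, hlen]
  split_ifs with h
  · -- nodup case
    have hnd : (A ++ y :: (B ++ x :: C)).Nodup := by
      have : ((A ++ y :: (B ++ x :: C) : List ℕ) : Multiset ℕ).Nodup := by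
        rw [h]; exact Multiset.coe_nodup.2 (List.nodup_range')
      exact Multiset.coe_nodup.1 this
    have hnd' : (A ++ x :: (B ++ y :: C)).Nodup := hperm.nodup_iff.2 hnd
    have h1 : (x :: (B ++ y :: C)).Nodup :=
      hnd'.sublist (List.sublist_append_right A _)
    have hxB : x ∉ B := by
      have := (List.nodup_cons.1 h1).1
      simp only [List.mem_append, List.mem_cons] at this
      tauto
    have hyB : y ∉ B := by
      have h2 : (B ++ y :: C).Nodup := (List.nodup_cons.1 h1).2
      rw [List.nodup_append] at h2
      intro hy
      exact h2.2.2 y hy y List.mem_cons_self rfl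
    have hodd := invCount_odd_swap hxy hxB hyB (A := A) (C := C)
    have hOdd : Odd (invCount (A ++ x :: (B ++ y :: C)) + invCount (A ++ y :: (B ++ x :: C))) :=
      Nat.odd_iff.2 hodd
    have hmul2 : ((-1 : ℤ) ^ invCount (A ++ x :: (B ++ y :: C)))
        * ((-1) ^ invCount (A ++ y :: (B ++ x :: C))) = -1 := by
      rw [← pow_add]; exact Odd.neg_one_pow hOdd
    have hsq : ((-1 : ℤ) ^ invCount (A ++ y :: (B ++ x :: C)))
        * ((-1) ^ invCount (A ++ y :: (B ++ x :: C))) = 1 := by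
      rw [← pow_add]; exact Even.neg_one_pow ⟨_, rfl⟩
    linear_combination ((-1 : ℤ) ^ invCount (A ++ y :: (B ++ x :: C))) * hmul2
      - ((-1 : ℤ) ^ invCount (A ++ x :: (B ++ y :: C))) * hsq
  · ring

lemma mem_blockList {m : ℕ} {s : Fin m → ℕ} {i : ℕ} {p : Fin m} :
    p ∈ blockList s i ↔ s p = i := by
  simp [blockList, List.mem_filter, List.mem_finRange]

lemma blockList_nodup {m : ℕ} (s : Fin m → ℕ) (i : ℕ) : (blockList s i).Nodup :=
  (List.nodup_finRange m).filter _

lemma seqSgn_not_nodup {l : List ℕ} (h : ¬ l.Nodup) : seqSgn l = 0 := by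
  unfold seqSgn
  split_ifs with hc
  · exact absurd (Multiset.coe_nodup.1 (hc ▸ Multiset.coe_nodup.2 (List.nodup_range'))) h
  · rfl

lemma sgnWord_swap_aux {m : ℕ} {s : Fin m → ℕ}
    (hr : ∀ p, 1 ≤ s p ∧ s p ≤ m) {p q : Fin m} (hpq : p ≠ q) (hspq : s p = s q)
    (σ : Fin m → ℕ) {A B C : List (Fin m)}
    (hdec : blockList s (s p) = A ++ p :: (B ++ q :: C)) :
    sgnWord s (fun r => σ (Equiv.swap p q r)) = - sgnWord s σ := by
  set σ' : Fin m → ℕ := fun r => σ (Equiv.swap p q r) with hσ'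
  have hi0 : s p - 1 ∈ Finset.range m := Finset.mem_range.2 (by have := hr p; omega)
  have hi0succ : (s p - 1) + 1 = s p := by have := hr p; omega
  -- nodup facts
  have hnd : (A ++ p :: (B ++ q :: C)).Nodup := hdec ▸ blockList_nodup s (s p)
  rw [List.nodup_append] at hnd
  have hpA : p ∉ A := fun h => hnd.2.2 p h p List.mem_cons_self rfl
  have hqA : q ∉ A := fun h => hnd.2.2 q h q (by simp) rfl
  have hnd2 := hnd.2.1
  rw [List.nodup_cons, List.nodup_append] at hnd2
  have hpB : p ∉ B := fun h => hnd2.1 (by simp [h])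
  have hpC : p ∉ C := fun h => hnd2.1 (by simp [h])
  have hqB : q ∉ B := fun h => hnd2.2.2.2 q h q List.mem_cons_self rfl
  have hqC : q ∉ C := (List.nodup_cons.1 hnd2.2.2.1).1
  -- the factor at i0
  have hfac : seqSgn ((blockList s (s p)).map σ')
      = - seqSgn ((blockList s (s p)).map σ) := by
    have hmapA : A.map σ' = A.map σ := List.map_congr_left (fun r hrA => by
      simp only [hσ']
      rw [Equiv.swap_apply_of_ne_of_ne (by rintro rfl; exact hpA hrA)
        (by rintro rfl; exact hqA hrA)])
    have hmapB : B.map σ' = B.map σ := List.map_congr_left (fun r hrB => by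
      simp only [hσ']
      rw [Equiv.swap_apply_of_ne_of_ne (by rintro rfl; exact hpB hrB)
        (by rintro rfl; exact hqB hrB)])
    have hmapC : C.map σ' = C.map σ := List.map_congr_left (fun r hrC => by
      simp only [hσ']
      rw [Equiv.swap_apply_of_ne_of_ne (by rintro rfl; exact hpC hrC)
        (by rintro rfl; exact hqC hrC)])
    have hσ'p : σ' p = σ q := by simp [hσ']
    have hσ'q : σ' q = σ p := by simp [hσ']
    rw [hdec]
    simp only [List.map_append, List.map_cons, hmapA, hmapB, hmapC, hσ'p, hσ'q]
    by_cases hσpq : σ p = σ q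
    · rw [hσpq]
      have hnodup : ¬ (A.map σ ++ σ q :: (B.map σ ++ σ q :: C.map σ)).Nodup := by
        simp [List.nodup_append, List.nodup_cons]
      rw [seqSgn_not_nodup hnodup]
      ring
    · exact seqSgn_swap _ _ _ (fun h => hσpq h.symm)
  -- assemble the product
  unfold sgnWord
  rw [← Finset.mul_prod_erase _ _ hi0, ← Finset.mul_prod_erase _ _ hi0,
    hi0succ, hfac]
  have hrest : ∏ i ∈ (Finset.range m).erase (s p - 1), seqSgn ((blockList s (i + 1)).map σ')
      = ∏ i ∈ (Finset.range m).erase (s p - 1), seqSgn ((blockList s (i + 1)).map σ) := by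
    apply Finset.prod_congr rfl
    intro i hi
    have hine : i ≠ s p - 1 := (Finset.mem_erase.1 hi).1
    congr 1
    apply List.map_congr_left
    intro r hrB
    have hsr : s r = i + 1 := mem_blockList.1 hrB
    have hrp : r ≠ p := fun h => by rw [h] at hsr; omega
    have hrq : r ≠ q := fun h => by rw [h, ← hspq] at hsr; omega
    simp only [hσ']
    rw [Equiv.swap_apply_of_ne_of_ne hrp hrq]
  rw [hrest]
  ring

lemma sgnWord_comp_swap {m : ℕ} {s : Fin m → ℕ}
    (hr : ∀ p, 1 ≤ s p ∧ s p ≤ m) {p q : Fin m} (hpq : p ≠ q) (hspq : s p = s q)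
    (σ : Fin m → ℕ) :
    sgnWord s (fun r => σ (Equiv.swap p q r)) = - sgnWord s σ := by
  have hpmem : p ∈ blockList s (s p) := mem_blockList.2 rfl
  obtain ⟨A1, D1, hA⟩ := List.append_of_mem hpmem
  have hqmem : q ∈ A1 ++ p :: D1 := hA ▸ mem_blockList.2 hspq.symm
  rcases List.mem_append.1 hqmem with hq1 | hq2
  · -- q before p
    obtain ⟨B', C', hB⟩ := List.append_of_mem hq1
    have hdec : blockList s (s q) = B' ++ q :: (C' ++ p :: D1) := by
      rw [← hspq, hA, hB]; simp
    have := sgnWord_swap_aux hr (Ne.symm hpq) hspq.symm σ hdec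
    rw [Equiv.swap_comm q p] at this
    exact this
  · rcases List.mem_cons.1 hq2 with h | hq3
    · exact absurd h.symm hpq
    · obtain ⟨B, C, hB⟩ := List.append_of_mem hq3
      have hdec : blockList s (s p) = A1 ++ p :: (B ++ q :: C) := by rw [hA, hB]
      exact sgnWord_swap_aux hr hpq hspq σ hdec

lemma pact_mul {m : ℕ} (a b : Equiv.Perm (Fin m)) (t : Fin m → ℕ) :
    pact (a * b) t = pact a (pact b t) := by
  funext r
  simp [pact, mul_inv_rev]

lemma pact_one {m : ℕ} (t : Fin m → ℕ) : pact 1 t = t := rfl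

lemma comp_eq_of_mem_Ysub {m : ℕ} {s : Fin m → ℕ} {x : Equiv.Perm (Fin m)}
    (hx : pact x s = s) : ∀ r, s (x r) = s r := by
  intro r
  have h2 : s r = s (x r) := by simpa [pact] using congrFun hx (x r)
  exact h2.symm

lemma sgnWord_pact_aux {m : ℕ} {s : Fin m → ℕ} (hr : ∀ p, 1 ≤ s p ∧ s p ≤ m) :
    ∀ (n : ℕ) (x : Equiv.Perm (Fin m)), x.support.card ≤ n → pact x s = s →
      ∀ σ : Fin m → ℕ,
        sgnWord s (pact x σ) = ((Equiv.Perm.sign x : ℤˣ) : ℤ) * sgnWord s σ := by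
  intro n
  induction n with
  | zero =>
    intro x hc hx σ
    have hx1 : x = 1 := by
      rw [← Equiv.Perm.card_support_eq_zero]
      omega
    rw [hx1, pact_one]
    simp
  | succ n ih =>
    intro x hc hx σ
    by_cases hx1 : x = 1
    · rw [hx1, pact_one]; simp
    · obtain ⟨p, hp⟩ : ∃ p, x p ≠ p := by
        by_contra hcon
        push_neg at hcon
        exact hx1 (Equiv.ext hcon)
      have hsxp : s (x p) = s p := comp_eq_of_mem_Ysub hx p
      set τ := Equiv.swap p (x p) with hτ
      set x' := τ * x with hx'
      have hxeq : x = τ * x' := by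
        rw [hx', ← mul_assoc, hτ, Equiv.swap_mul_self, one_mul]
      have hτs : pact τ s = s := by
        funext r
        simp only [pact, hτ, Equiv.swap_inv]
        rcases eq_or_ne r p with rfl | hrp
        · rw [Equiv.swap_apply_left]; exact hsxp
        · rcases eq_or_ne r (x p) with rfl | hrxp
          · rw [Equiv.swap_apply_right]; exact hsxp.symm
          · rw [Equiv.swap_apply_of_ne_of_ne hrp hrxp]
      have hx's : pact x' s = s := by
        rw [hx', pact_mul, hx, hτs]
      have hcard : x'.support.card ≤ n := by
        have h3 := Equiv.Perm.card_support_swap_mul hp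
        rw [← hτ, ← hx'] at h3
        omega
      have hstep : sgnWord s (pact x σ) = - sgnWord s (pact x' σ) := by
        rw [hxeq, pact_mul]
        have : pact τ (pact x' σ) = fun r => (pact x' σ) (Equiv.swap p (x p) r) := by
          funext r
          simp [pact, hτ, Equiv.swap_inv]
        rw [this]
        exact sgnWord_comp_swap hr (Ne.symm hp) hsxp.symm (pact x' σ)
      rw [hstep, ih x' hcard hx's σ]
      have hsign : Equiv.Perm.sign x = - Equiv.Perm.sign x' := by
        rw [hxeq, Equiv.Perm.sign_mul, Equiv.Perm.sign_swap (Ne.symm hp), neg_one_mul]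
      rw [hsign]
      push_cast
      ring

lemma sgnWord_pact_Ysub {m : ℕ} {s : Fin m → ℕ} (hr : ∀ p, 1 ≤ s p ∧ s p ≤ m)
    {x : Equiv.Perm (Fin m)} (hx : x ∈ Ysub s) (σ : Fin m → ℕ) :
    sgnWord s (pact x σ) = ((Equiv.Perm.sign x : ℤˣ) : ℤ) * sgnWord s σ :=
  sgnWord_pact_aux hr x.support.card x le_rfl hx σ

lemma blockList_toFinset {m : ℕ} (s : Fin m → ℕ) (i : ℕ) :
    (blockList s i).toFinset = Finset.univ.filter (fun p => s p = i) := by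
  ext q
  simp [List.mem_toFinset, mem_blockList]

lemma blockList_length {m : ℕ} (s : Fin m → ℕ) (i : ℕ) :
    (blockList s i).length = (Finset.univ.filter (fun p => s p = i)).card := by
  rw [← blockList_toFinset, List.toFinset_card_of_nodup (blockList_nodup s i)]

lemma blockList_length_weight {m : ℕ} {s : Fin m → ℕ} {L : List ℕ} (hs : hasWeight s L)
    (i : ℕ) : (blockList s (i + 1)).length = L.getD i 0 := by
  rw [blockList_length, hs i]

lemma sum_getD (L : List ℕ) : ∑ i ∈ Finset.range L.length, L.getD i 0 = L.sum := by
  induction L with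
  | nil => simp
  | cons a T ih =>
    rw [List.length_cons, Finset.sum_range_succ']
    simp only [List.getD_cons_succ, List.getD_cons_zero, List.sum_cons, ih]
    omega

lemma length_le_sum {L : List ℕ} (h : ∀ a ∈ L, 0 < a) : L.length ≤ L.sum := by
  induction L with
  | nil => simp
  | cons a T ih =>
    simp only [List.length_cons, List.sum_cons]
    have h1 := h a List.mem_cons_self
    have h2 := ih (fun b hb => h b (List.mem_cons_of_mem _ hb))
    omega

lemma valRange {m : ℕ} {L : List ℕ} (hL : IsPartitionOf m L) {s : Fin m → ℕ}
    (hs : hasWeight s L) : ∀ p, 1 ≤ s p ∧ s p ≤ L.length := by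
  by_contra hcon
  push_neg at hcon
  obtain ⟨p, hbad⟩ := hcon
  have hm : 0 < m := p.pos
  have hsum : ∑ i ∈ Finset.range L.length,
      (Finset.univ.filter (fun q => s q = i + 1)).card = m := by
    have : ∀ i ∈ Finset.range L.length,
        (Finset.univ.filter (fun q => s q = i + 1)).card = L.getD i 0 := fun i _ => hs i
    rw [Finset.sum_congr rfl this, sum_getD, hL.2.2]
  have hdisj : ∀ i ∈ Finset.range L.length, ∀ j ∈ Finset.range L.length, i ≠ j →
      Disjoint (Finset.univ.filter (fun q => s q = i + 1))
        (Finset.univ.filter (fun q => s q = j + 1)) := by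
    intro i _ j _ hij
    rw [Finset.disjoint_left]
    intro q hqi hqj
    simp only [Finset.mem_filter] at hqi hqj
    omega
  have hcard := Finset.card_biUnion hdisj
  have hsub : (Finset.range L.length).biUnion
      (fun i => Finset.univ.filter (fun q => s q = i + 1)) ⊆ Finset.univ.erase p := by
    intro q hq
    simp only [Finset.mem_biUnion, Finset.mem_range, Finset.mem_filter] at hq
    obtain ⟨i, hi, _, hsq⟩ := hq
    rw [Finset.mem_erase]
    refine ⟨fun hqp => ?_, Finset.mem_univ q⟩
    subst hqp
    have := hbad (by omega)
    omega
  have hle := Finset.card_le_card hsub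
  rw [hcard, hsum] at hle
  rw [Finset.card_erase_of_mem (Finset.mem_univ p)] at hle
  simp [Finset.card_univ] at hle
  omega

lemma sortedCount {L : List ℕ} (hL : L.Pairwise (· ≥ ·)) :
    ∀ (i0 : ℕ), i0 < L.length → ∀ c, c ≤ L.getD i0 0 →
      i0 + 1 ≤ L.countP (fun p => decide (c ≤ p)) := by
  induction L with
  | nil => simp
  | cons a T ih =>
    intro i0 hi0 c hc
    rw [List.pairwise_cons] at hL
    rcases Nat.eq_zero_or_pos i0 with rfl | hpos
    · simp only [List.getD_cons_zero] at hc
      rw [List.countP_cons]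
      simp only [decide_eq_true_eq]
      rw [if_pos hc]
      omega
    · obtain ⟨i1, rfl⟩ : ∃ i1, i0 = i1 + 1 := ⟨i0 - 1, by omega⟩
      simp only [List.length_cons] at hi0
      simp only [List.getD_cons_succ] at hc
      have h1 := ih hL.2 i1 (by omega) c hc
      have hca : c ≤ a := by
        have : T.getD i1 0 ≤ a := by
          have hmem : T.getD i1 0 = T[i1] := List.getD_eq_getElem T 0 (by omega)
          rw [hmem]
          exact hL.1 _ (List.getElem_mem _)
        omega
      rw [List.countP_cons]
      simp only [decide_eq_true_eq]
      rw [if_pos hca]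
      omega

lemma mem_Gst_iff {m : ℕ} (s t : Fin m → ℕ) (π : Equiv.Perm (Fin m)) :
    π ∈ Gst s t ↔ ∀ i ∈ Finset.range m,
      (((blockList s (i + 1)).map (pact π t)) : Multiset ℕ)
        = ((List.range' 1 ((blockList s (i + 1)).map (pact π t)).length : List ℕ) :
            Multiset ℕ) := by
  unfold Gst sgnWord
  rw [Set.mem_setOf_eq, Finset.prod_ne_zero_iff]
  simp only [seqSgn_ne_zero_iff]

lemma headD_eq_getD (L : List ℕ) : L.headD 0 = L.getD 0 0 := by
  cases L <;> rfl

lemma conjList_getD {L : List ℕ} {j : ℕ} (hj : j < L.headD 0) :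
    (conjList L).getD j 0 = L.countP (fun p => decide (j + 1 ≤ p)) := by
  unfold conjList
  rw [List.getD_eq_getElem _ 0 (by simpa using hj)]
  simp

lemma map_indexOf {α : Type*} [DecidableEq α] {l : List α} (h : l.Nodup) :
    l.map (fun a => l.idxOf a) = List.range l.length := by
  apply List.ext_getElem (by simp)
  intro j h1 h2
  simp only [List.getElem_map, List.getElem_range]
  exact List.Nodup.idxOf_getElem h j (by simpa using h1)

lemma sorted_getD_le {L : List ℕ} (hL : L.Pairwise (· ≥ ·)) {i : ℕ} (hi : i < L.length) :
    L.getD i 0 ≤ L.getD 0 0 := by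
  rcases Nat.eq_zero_or_pos i with rfl | hpos
  · exact le_refl _
  rw [List.getD_eq_getElem _ 0 hi, List.getD_eq_getElem _ 0 (by omega)]
  exact List.pairwise_iff_getElem.1 hL 0 i (by omega) hi hpos

lemma exists_mem_Gst {m : ℕ} {L : List ℕ} (hL : IsPartitionOf m L) {s t : Fin m → ℕ}
    (hs : hasWeight s L) (ht : hasWeight t (conjList L)) : ∃ h, h ∈ Gst s t := by
  have hvr := valRange hL hs
  set rk : Fin m → ℕ := fun p => (blockList s (s p)).idxOf p with hrk
  have hrk_lt : ∀ p, rk p < (blockList s (s p)).length :=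
    fun p => List.idxOf_lt_length_iff.2 (mem_blockList.2 rfl)
  have hsucc : ∀ p : Fin m, (s p - 1) + 1 = s p := fun p => by have := hvr p; omega
  have hblen : ∀ p : Fin m, (blockList s (s p)).length = L.getD (s p - 1) 0 := by
    intro p
    rw [← hsucc p, blockList_length_weight hs]
    simp
  have pf : ∀ p : Fin m, s p - 1 < (blockList t (rk p + 1)).length := by
    intro p
    have h1 : rk p < L.getD (s p - 1) 0 := by rw [← hblen p]; exact hrk_lt p
    have h2 : s p - 1 < L.length := by have := hvr p; omega
    have h3 : rk p < L.headD 0 := by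
      have := sorted_getD_le hL.1 h2
      rw [headD_eq_getD]
      omega
    have h4 : (blockList t (rk p + 1)).length = (conjList L).getD (rk p) 0 :=
      blockList_length_weight ht (rk p)
    rw [h4, conjList_getD h3]
    have h5 := sortedCount hL.1 (s p - 1) h2 (rk p + 1) (by omega)
    omega
  set g : Fin m → Fin m := fun p => (blockList t (rk p + 1)).get ⟨s p - 1, pf p⟩ with hg
  have htg : ∀ p, t (g p) = rk p + 1 := by
    intro p
    exact mem_blockList.1 (List.get_mem _ _)
  have hginj : Function.Injective g := by
    intro p p' hpp'
    have h1 : rk p = rk p' := by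
      have := htg p
      rw [hpp', htg p'] at this
      omega
    have h2 : s p = s p' := by
      have e1 : (blockList t (rk p + 1)).idxOf (g p) = s p - 1 := by
        rw [hg]
        exact List.Nodup.idxOf_getElem (blockList_nodup t _) _ (pf p)
      have e2 : (blockList t (rk p' + 1)).idxOf (g p') = s p' - 1 := by
        rw [hg]
        exact List.Nodup.idxOf_getElem (blockList_nodup t _) _ (pf p')
      rw [← h1, ← hpp'] at e2
      have := hvr p
      have := hvr p'
      omega
    have h6 : (blockList s (s p))[rk p]? = some p := by
      rw [List.getElem?_eq_getElem (hrk_lt p), List.getElem_idxOf (hrk_lt p)]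
    have h7 : (blockList s (s p'))[rk p']? = some p' := by
      rw [List.getElem?_eq_getElem (hrk_lt p'), List.getElem_idxOf (hrk_lt p')]
    rw [← h2, ← h1] at h7
    rw [h6] at h7
    exact Option.some_injective _ h7
  have hgbij : Function.Bijective g := Finite.injective_iff_bijective.1 hginj
  set G : Equiv.Perm (Fin m) := Equiv.ofBijective g hgbij with hG
  refine ⟨G⁻¹, ?_⟩
  rw [mem_Gst_iff]
  intro i hi
  have hpact : ∀ p, pact G⁻¹ t p = t (g p) := by
    intro p
    simp [pact, hG, Equiv.ofBijective_apply]
  have hlist : (blockList s (i + 1)).map (pact G⁻¹ t)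
      = List.range' 1 (blockList s (i + 1)).length := by
    have hstep1 : (blockList s (i + 1)).map (pact G⁻¹ t)
        = (blockList s (i + 1)).map (fun p => (blockList s (i + 1)).idxOf p + 1) := by
      apply List.map_congr_left
      intro p hp
      rw [hpact p, htg p]
      have hspi : s p = i + 1 := mem_blockList.1 hp
      simp only [hrk, hspi]
    rw [hstep1]
    have hstep2 : (blockList s (i + 1)).map (fun p => (blockList s (i + 1)).idxOf p + 1)
        = ((blockList s (i + 1)).map (fun p => (blockList s (i + 1)).idxOf p)).map
            (fun j => j + 1) := by
      rw [List.map_map]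
      rfl
    rw [hstep2, map_indexOf (blockList_nodup s (i + 1)), List.range'_eq_map_range]
    apply List.map_congr_left
    intro j _
    omega
  rw [hlist]
  simp

lemma map_nodup_of_mem_Gst {m : ℕ} {s t : Fin m → ℕ} {π : Equiv.Perm (Fin m)}
    (hπ : π ∈ Gst s t) {i : ℕ} (hi : i ∈ Finset.range m) :
    ((blockList s (i + 1)).map (pact π t)).Nodup := by
  have := (mem_Gst_iff s t π).1 hπ i hi
  have h2 : (((blockList s (i + 1)).map (pact π t)) : Multiset ℕ).Nodup := by
    rw [this]
    exact Multiset.coe_nodup.2 (List.nodup_range')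
  exact Multiset.coe_nodup.1 h2

lemma Gst_decomp {m : ℕ} {L : List ℕ} (hL : IsPartitionOf m L) {s t : Fin m → ℕ}
    (hs : hasWeight s L) {h w : Equiv.Perm (Fin m)} (hh : h ∈ Gst s t) (hw : w ∈ Gst s t) :
    ∃ x ∈ Ysub s, ∃ y ∈ Ysub t, w = x * h * y := by
  have hvr := valRange hL hs
  have hlenm : L.length ≤ m := by
    have := length_le_sum hL.2.1
    have h2 := hL.2.2
    omega
  have hsucc : ∀ p : Fin m, (s p - 1) + 1 = s p := fun p => by have := hvr p; omega
  have hi0 : ∀ p : Fin m, s p - 1 ∈ Finset.range m :=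
    fun p => Finset.mem_range.2 (by have := hvr p; omega)
  have hPh : ∀ p : Fin m, (((blockList s (s p)).map (pact h t)) : Multiset ℕ)
      = ((List.range' 1 (blockList s (s p)).length : List ℕ) : Multiset ℕ) := by
    intro p
    have := (mem_Gst_iff s t h).1 hh (s p - 1) (hi0 p)
    rw [hsucc p] at this
    simpa using this
  have hPw : ∀ p : Fin m, (((blockList s (s p)).map (pact w t)) : Multiset ℕ)
      = ((List.range' 1 (blockList s (s p)).length : List ℕ) : Multiset ℕ) := by
    intro p
    have := (mem_Gst_iff s t w).1 hw (s p - 1) (hi0 p)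
    rw [hsucc p] at this
    simpa using this
  have hmemw : ∀ p : Fin m, pact h t p ∈ (blockList s (s p)).map (pact w t) := by
    intro p
    have h1 : pact h t p ∈ (blockList s (s p)).map (pact h t) :=
      List.mem_map_of_mem (mem_blockList.2 rfl)
    have h2 : pact h t p ∈ (((blockList s (s p)).map (pact h t)) : Multiset ℕ) :=
      Multiset.mem_coe.2 h1
    rw [hPh p, ← hPw p] at h2
    exact Multiset.mem_coe.1 h2
  have pf : ∀ p : Fin m,
      ((blockList s (s p)).map (pact w t)).idxOf (pact h t p)
        < (blockList s (s p)).length := by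
    intro p
    have := List.idxOf_lt_length_iff.2 (hmemw p)
    simpa using this
  set x : Fin m → Fin m := fun p =>
    (blockList s (s p)).get ⟨((blockList s (s p)).map (pact w t)).idxOf (pact h t p), pf p⟩
    with hx
  have hsx : ∀ p, s (x p) = s p := by
    intro p
    exact mem_blockList.1 (List.get_mem _ _)
  have hwx : ∀ p, pact w t (x p) = pact h t p := by
    intro p
    have h1 : ((blockList s (s p)).map (pact w t))[((blockList s (s p)).map
        (pact w t)).idxOf (pact h t p)]'(by simpa using pf p) = pact h t p :=
      List.getElem_idxOf (by simpa using pf p)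
    rw [List.getElem_map] at h1
    exact h1
  have hxinj : Function.Injective x := by
    intro p p' hpp'
    have h2 : s p = s p' := by rw [← hsx p, ← hsx p', hpp']
    have h3 : pact h t p = pact h t p' := by
      rw [← hwx p, ← hwx p', hpp']
    have hnd : ((blockList s (s p)).map (pact h t)).Nodup := by
      have := map_nodup_of_mem_Gst hh (hi0 p)
      rwa [hsucc p] at this
    exact List.inj_on_of_nodup_map hnd (mem_blockList.2 rfl)
      (mem_blockList.2 h2.symm) h3
  set X : Equiv.Perm (Fin m) := Equiv.ofBijective x (Finite.injective_iff_bijective.1 hxinj)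
    with hX
  have hXapp : ∀ p, X p = x p := fun p => rfl
  have hXY : X ∈ Ysub s := by
    show pact X s = s
    funext r
    show s (X⁻¹ r) = s r
    have e : x (X⁻¹ r) = r := Equiv.apply_symm_apply X r
    exact (hsx (X⁻¹ r)).symm.trans (congrArg s e)
  refine ⟨X, hXY, h⁻¹ * X⁻¹ * w, ?_, by group⟩
  show pact (h⁻¹ * X⁻¹ * w) t = t
  funext r
  show t ((h⁻¹ * X⁻¹ * w)⁻¹ r) = t r
  have hinv : (h⁻¹ * X⁻¹ * w)⁻¹ = w⁻¹ * X * h := by group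
  rw [hinv]
  show t (w⁻¹ (X (h r))) = t r
  have h4 : pact w t (X (h r)) = pact h t (h r) := by rw [hXapp]; exact hwx (h r)
  have h5 : pact h t (h r) = t r := by
    show t (h⁻¹ (h r)) = t r
    exact congrArg t (h.symm_apply_apply r)
  rw [← h5]
  exact h4


/-- `G(s,t)` is nonempty and is a single double coset `Y_s · h · Y_t` for any
`h ∈ G(s,t)`; moreover `sgn_s((xhy)·t) = sgn(x)·sgn_s(h·t)` for `x ∈ Y_s`, `y ∈ Y_t`. -/
theorem stmt1 {m : ℕ} (L : List ℕ) (hL : IsPartitionOf m L)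
    (s t : Fin m → ℕ) (hs : hasWeight s L) (ht : hasWeight t (conjList L)) :
    (Gst s t).Nonempty ∧
      ∀ h ∈ Gst s t,
        (Gst s t = {w | ∃ x ∈ Ysub s, ∃ y ∈ Ysub t, w = x * h * y}) ∧
        ∀ x ∈ Ysub s, ∀ y ∈ Ysub t,
          sgnWord s (pact (x * h * y) t) =
            ((Equiv.Perm.sign x : ℤ)) * sgnWord s (pact h t) := by
  have hvr0 := valRange hL hs
  have hlenm : L.length ≤ m := by
    have h1 := length_le_sum hL.2.1
    have h2 := hL.2.2
    omega
  have hr : ∀ p, 1 ≤ s p ∧ s p ≤ m := fun p => by have := hvr0 p; omega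
  obtain ⟨h0, hh0⟩ := exists_mem_Gst hL hs ht
  have key : ∀ h : Equiv.Perm (Fin m), ∀ x ∈ Ysub s, ∀ y ∈ Ysub t,
      sgnWord s (pact (x * h * y) t) =
        ((Equiv.Perm.sign x : ℤˣ) : ℤ) * sgnWord s (pact h t) := by
    intro h x hx y hy
    have h1 : pact (x * h * y) t = pact x (pact h t) := by
      rw [pact_mul, pact_mul, (hy : pact y t = t)]
    rw [h1, sgnWord_pact_Ysub hr hx]
  refine ⟨⟨h0, hh0⟩, fun h hhmem => ⟨?_, fun x hx y hy => key h x hx y hy⟩⟩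
  ext w
  simp only [Set.mem_setOf_eq]
  constructor
  · intro hwmem
    exact Gst_decomp hL hs hhmem hwmem
  · rintro ⟨x, hx, y, hy, rfl⟩
    show sgnWord s (pact (x * h * y) t) ≠ 0
    rw [key h x hx y hy]
    exact mul_ne_zero (Units.ne_zero _) hhmem
end

section
/- For words s of weight λ and t of weight λ' (λ ⊢ m), the set G(s,t) = {w ∈ S_m : sgn_s(w·t) ≠ 0} satisfies G(s,t)⁻¹ = G(t,s), i.e. w ∈ G(s,t) if and only if w⁻¹ ∈ G(t,s). -/
open Finset

-- L1
lemma aux_card_filter_comp {m : ℕ} (e : Equiv.Perm (Fin m)) (P : Fin m → Prop) [DecidablePred P] :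
    (univ.filter (fun p => P (e p))).card = (univ.filter P).card := by
  refine Finset.card_bij (fun p _ => e p) ?_ ?_ ?_
  · intro p hp; simp only [mem_filter, mem_univ, true_and] at hp ⊢; exact hp
  · intro p _ q _ h; exact e.injective h
  · intro q hq; refine ⟨e.symm q, ?_, by simp⟩
    simp only [mem_filter, mem_univ, true_and, Equiv.apply_symm_apply] at hq ⊢; exact hq

-- helper for L2
lemma aux_sum_ite (a k : ℕ) : ∑ j ∈ range k, (if j + 1 ≤ a then 1 else 0) = min a k := by
  induction k with
  | zero => simp
  | succ k ih => rw [Finset.sum_range_succ, ih]; split <;> omega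

-- L2
lemma aux_sum_countP (L : List ℕ) (k : ℕ) :
    ∑ j ∈ range k, L.countP (fun p => decide (j + 1 ≤ p)) = (L.map (fun p => min p k)).sum := by
  induction L with
  | nil => simp
  | cons a L ih =>
    simp only [List.countP_cons, List.map_cons, List.sum_cons, Finset.sum_add_distrib, ih]
    rw [Nat.add_comm]
    congr 1
    simpa using aux_sum_ite a k

-- L3
lemma aux_le_head {L : List ℕ} (h : L.Pairwise (· ≥ ·)) : ∀ p ∈ L, p ≤ L.headD 0 := by
  cases L with
  | nil => simp
  | cons a L =>
    rw [List.pairwise_cons] at h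
    intro p hp
    rcases List.mem_cons.1 hp with rfl | hp
    · simp
    · simpa using h.1 p hp

-- L4
lemma aux_conj_getD {L : List ℕ} (h : L.Pairwise (· ≥ ·)) (j : ℕ) :
    (conjList L).getD j 0 = L.countP (fun p => decide (j + 1 ≤ p)) := by
  unfold conjList
  by_cases hj : j < L.headD 0
  · rw [List.getD_eq_getElem _ _ (by simpa using hj)]
    simp
  · rw [List.getD_eq_default _ _ (by simpa using hj)]
    symm
    rw [List.countP_eq_zero]
    intro p hp
    have := aux_le_head h p hp
    simp only [decide_eq_true_eq]
    omega

-- L5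
lemma aux_min_countP_take {L : List ℕ} (h : L.Pairwise (· ≥ ·)) (k j : ℕ) :
    min (L.countP (fun p => decide (j + 1 ≤ p))) k
      = (L.take k).countP (fun p => decide (j + 1 ≤ p)) := by
  induction L generalizing k with
  | nil => simp
  | cons a L ih =>
    rw [List.pairwise_cons] at h
    cases k with
    | zero => simp
    | succ k =>
      rw [List.take_succ_cons, List.countP_cons, List.countP_cons]
      by_cases ha : j + 1 ≤ a
      · have hd : (if decide (j + 1 ≤ a) = true then 1 else 0) = 1 := by simp [ha]
        rw [hd, ← ih h.2 k]
        omega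
      · have h0 : L.countP (fun p => decide (j + 1 ≤ p)) = 0 := by
          rw [List.countP_eq_zero]
          intro p hp
          have := h.1 p hp
          simp only [decide_eq_true_eq]; omega
        have h1 : (L.take k).countP (fun p => decide (j + 1 ≤ p)) = 0 :=
          Nat.le_zero.1 (h0 ▸ (List.take_sublist k L).countP_le)
        rw [h0, h1]; simp [ha]

-- L6
lemma aux_sum_getD_min (L : List ℕ) (k K : ℕ) :
    ∑ a ∈ range k, min (L.getD a 0) K = ((L.take k).map (fun p => min p K)).sum := by
  induction L generalizing k with
  | nil => simp
  | cons a L ih =>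
    cases k with
    | zero => simp
    | succ k =>
      rw [Finset.sum_range_succ']
      simp only [List.getD_cons_succ, List.getD_cons_zero, List.take_succ_cons,
        List.map_cons, List.sum_cons, ih]
      omega

-- L7
lemma aux_sum_getD (L : List ℕ) (k : ℕ) :
    ∑ a ∈ range k, L.getD a 0 = (L.take k).sum := by
  induction L generalizing k with
  | nil => simp
  | cons a L ih =>
    cases k with
    | zero => simp
    | succ k =>
      rw [Finset.sum_range_succ']
      simp only [List.getD_cons_succ, List.getD_cons_zero, List.take_succ_cons,
        List.sum_cons, ih]
      omega

-- L8
lemma aux_length_le_sum {L : List ℕ} (h : ∀ p ∈ L, 0 < p) : L.length ≤ L.sum := by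
  induction L with
  | nil => simp
  | cons a L ih =>
    simp only [List.length_cons, List.sum_cons]
    have := h a (by simp)
    have := ih (fun p hp => h p (by simp [hp]))
    omega
-- coverage
lemma aux_coverage {m : ℕ} (v : Fin m → ℕ)
    (h : ∑ a ∈ range m, (univ.filter (fun p : Fin m => v p = a + 1)).card = m) :
    ∀ p : Fin m, ∃ a, a < m ∧ v p = a + 1 := by
  have hdisj : ∀ a ∈ range m, ∀ b ∈ range m, a ≠ b →
      Disjoint (univ.filter (fun p : Fin m => v p = a + 1))
        (univ.filter (fun p : Fin m => v p = b + 1)) := by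
    intro a _ b _ hab
    rw [Finset.disjoint_left]
    intro p hp hq
    simp only [mem_filter] at hp hq
    omega
  by_contra hc
  push_neg at hc
  obtain ⟨p, hp⟩ := hc
  have hsub : (range m).biUnion (fun a => univ.filter (fun q : Fin m => v q = a + 1))
      ⊆ univ.erase p := by
    intro q hq
    simp only [Finset.mem_biUnion, mem_filter, mem_univ, true_and, mem_range] at hq
    obtain ⟨a, ha, hva⟩ := hq
    refine Finset.mem_erase.2 ⟨?_, mem_univ q⟩
    rintro rfl
    exact (hp a ha) hva
  have hcard := Finset.card_le_card hsub
  rw [Finset.card_biUnion hdisj, h, Finset.card_erase_of_mem (mem_univ p)] at hcard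
  have : 0 < m := p.pos
  simp [Finset.card_univ] at hcard
  omega

lemma aux_core {m : ℕ} (s u : Fin m → ℕ) (f g : ℕ → ℕ)
    (hf : ∀ a, (univ.filter (fun p : Fin m => s p = a + 1)).card = f a)
    (hg : ∀ j, (univ.filter (fun p : Fin m => u p = j + 1)).card = g j)
    (hlink : ∀ k, ∑ j ∈ range k, g j = ∑ a ∈ range m, min (f a) k)
    (h6 : ∑ a ∈ range m, f a = m) :
    sgnWord s u ≠ 0 ↔ Function.Injective (fun p => (s p, u p)) := by
  set A : ℕ → Finset (Fin m) := fun a => univ.filter (fun p : Fin m => s p = a + 1) with hA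
  -- s coverage
  have hcovS : ∀ p : Fin m, ∃ a, a < m ∧ s p = a + 1 :=
    aux_coverage s (by rw [Finset.sum_congr rfl (fun a _ => hf a)]; exact h6)
  -- block list multiset
  have hblval : ∀ a : ℕ, ((blockList s (a + 1) : List (Fin m)) : Multiset (Fin m)) = (A a).val := by
    intro a
    rw [hA]
    rw [Finset.filter_val, Fin.univ_def]
    rfl
  have hbl_card : ∀ a : ℕ, (blockList s (a + 1)).length = f a := by
    intro a
    have : (blockList s (a + 1)).length = Multiset.card ((blockList s (a + 1) : List (Fin m)) : Multiset (Fin m)) := rfl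
    rw [this, hblval a]
    exact hf a
  have hmem_bl : ∀ (a : ℕ) (p : Fin m), p ∈ blockList s (a + 1) ↔ s p = a + 1 := by
    intro a p
    simp [blockList, List.mem_filter]
  constructor
  · -- sgn ≠ 0 → injective
    intro hne p p' hpp'
    simp only [Prod.mk.injEq] at hpp'
    obtain ⟨a, ham, hsp⟩ := hcovS p
    have hsp' : s p' = a + 1 := hpp'.1 ▸ hsp
    have hfac : seqSgn ((blockList s (a + 1)).map u) ≠ 0 := by
      rw [sgnWord] at hne
      exact Finset.prod_ne_zero_iff.1 hne a (mem_range.2 ham)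
    rw [seqSgn] at hfac
    by_cases hcond : ((blockList s (a + 1)).map u : Multiset ℕ)
        = ((List.range' 1 ((blockList s (a + 1)).map u).length : List ℕ) : Multiset ℕ)
    · have hperm := Multiset.coe_eq_coe.1 hcond
      have hnd : ((blockList s (a + 1)).map u).Nodup :=
        hperm.nodup_iff.2 List.nodup_range'
      exact List.inj_on_of_nodup_map hnd ((hmem_bl a p).2 hsp) ((hmem_bl a p').2 hsp') hpp'.2
    · rw [if_neg hcond] at hfac
      exact absurd rfl hfac
  · -- injective → sgn ≠ 0
    intro hinj
    have hinjOn : ∀ a : ℕ, Set.InjOn u (A a) := by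
      intro a p hp p' hp' hu
      simp only [hA, Finset.coe_filter, Set.mem_setOf_eq, mem_univ, true_and] at hp hp'
      exact hinj (show (s p, u p) = (s p', u p') by rw [hp, hp', hu])
    set B : ℕ → Finset (Fin m) := fun k => univ.filter (fun p : Fin m => 1 ≤ u p ∧ u p ≤ k) with hB
    have hBcard : ∀ k, (B k).card = ∑ j ∈ range k, g j := by
      intro k
      have : B k = (range k).biUnion (fun j => univ.filter (fun p : Fin m => u p = j + 1)) := by
        ext p
        simp only [hB, mem_filter, mem_univ, true_and, Finset.mem_biUnion, mem_range]
        constructor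
        · intro h; exact ⟨u p - 1, by omega, by omega⟩
        · rintro ⟨j, hj, hup⟩; omega
      rw [this, Finset.card_biUnion]
      · exact Finset.sum_congr rfl fun j _ => hg j
      · intro a _ b _ hab
        simp only [Function.onFun]; rw [Finset.disjoint_left]
        intro p hp hq
        simp only [mem_filter] at hp hq
        omega
    have hsplit : ∀ k, ∑ a ∈ range m, (A a ∩ B k).card = (B k).card := by
      intro k
      have : B k = (range m).biUnion (fun a => A a ∩ B k) := by
        ext p
        simp only [Finset.mem_biUnion, mem_range, Finset.mem_inter]
        constructor
        · intro h
          obtain ⟨a, ham, hsp⟩ := hcovS p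
          exact ⟨a, ham, by simp [hA, hsp], h⟩
        · rintro ⟨a, _, _, h⟩; exact h
      conv_rhs => rw [this]
      rw [Finset.card_biUnion]
      intro a _ b _ hab
      simp only [Function.onFun]; rw [Finset.disjoint_left]
      intro p hp hq
      simp only [Finset.mem_inter, hA, mem_filter] at hp hq
      omega
    have hbound : ∀ k, ∀ a, (A a ∩ B k).card ≤ min (f a) k := by
      intro k a
      refine le_min ?_ ?_
      · exact (hf a) ▸ Finset.card_le_card Finset.inter_subset_left
      · have : (A a ∩ B k).card ≤ (Finset.Icc 1 k).card := by
          apply Finset.card_le_card_of_injOn u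
          · intro p hp
            have hp2 := (Finset.mem_inter.1 (Finset.mem_coe.1 hp)).2
            simp only [hB, mem_filter, mem_univ, true_and] at hp2
            exact Finset.mem_coe.2 (Finset.mem_Icc.2 hp2)
          · exact (hinjOn a).mono (by intro x hx; exact Finset.mem_coe.2 (Finset.mem_of_mem_inter_left (Finset.mem_coe.1 hx)))
        simpa using this
    have heq : ∀ k, ∀ a ∈ range m, (A a ∩ B k).card = min (f a) k := by
      intro k
      rw [← Finset.sum_eq_sum_iff_of_le (fun a _ => hbound k a)]
      rw [hsplit k, hBcard k, hlink k]
    have hAsub : ∀ a, a < m → ∀ p ∈ A a, u p ∈ Finset.Icc 1 (f a) := by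
      intro a ham p hp
      have h1 : (A a ∩ B (f a)).card = f a := by
        rw [heq (f a) a (mem_range.2 ham)]; omega
      have h2 : A a ∩ B (f a) = A a := by
        apply Finset.eq_of_subset_of_card_le Finset.inter_subset_left
        rw [h1, hf a]
      have : p ∈ B (f a) := by
        rw [← h2] at hp
        exact Finset.mem_of_mem_inter_right hp
      simp only [hB, mem_filter, mem_univ, true_and] at this
      exact Finset.mem_Icc.2 this
    have himage : ∀ a, a < m → (A a).image u = Finset.Icc 1 (f a) := by
      intro a ham
      apply Finset.eq_of_subset_of_card_le
      · intro x hx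
        obtain ⟨p, hp, rfl⟩ := Finset.mem_image.1 hx
        exact hAsub a ham p hp
      · rw [Finset.card_image_of_injOn (hinjOn a), hf a]
        simp
    rw [sgnWord]
    rw [Finset.prod_ne_zero_iff]
    intro a ha
    have hcond : (((blockList s (a + 1)).map u : List ℕ) : Multiset ℕ)
        = ((List.range' 1 ((blockList s (a + 1)).map u).length : List ℕ) : Multiset ℕ) := by
      have h1 : (((blockList s (a + 1)).map u : List ℕ) : Multiset ℕ)
          = Multiset.map u ((A a).val) := by
        rw [← hblval a]; rfl
      rw [h1, ← Finset.image_val_of_injOn (hinjOn a), himage a (mem_range.1 ha)]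
      rw [List.length_map, hbl_card a]
      rw [Nat.Icc_eq_range']
      simp
    rw [seqSgn, if_pos hcond]
    exact pow_ne_zero _ (by norm_num)

/-- `G(s,t)⁻¹ = G(t,s)`: `w ∈ G(s,t) ↔ w⁻¹ ∈ G(t,s)`. -/
theorem stmt2 {m : ℕ} (L : List ℕ) (hL : IsPartitionOf m L)
    (s t : Fin m → ℕ) (hs : hasWeight s L) (ht : hasWeight t (conjList L)) :
    ∀ w : Equiv.Perm (Fin m), w ∈ Gst s t ↔ w⁻¹ ∈ Gst t s := by
  obtain ⟨hsort, hpos, hsum⟩ := hL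
  have hlen : L.length ≤ m := hsum ▸ aux_length_le_sum hpos
  have htake : L.take m = L := List.take_of_length_le hlen
  have hle_sum : ∀ p ∈ L, p ≤ m := fun p hp =>
    hsum ▸ List.single_le_sum (fun x _ => Nat.zero_le x) p hp
  have h6A : ∑ a ∈ range m, L.getD a 0 = m := by rw [aux_sum_getD, htake, hsum]
  have hminm : ∀ a, min (L.getD a 0) m = L.getD a 0 := by
    intro a
    by_cases h : a < L.length
    · have hmem : L.getD a 0 ∈ L := by
        rw [List.getD_eq_getElem _ _ h]; exact List.getElem_mem _
      exact min_eq_left (hle_sum _ hmem)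
    · rw [List.getD_eq_default _ _ (le_of_not_gt h)]; simp
  have linkA : ∀ k, ∑ j ∈ range k, (conjList L).getD j 0
      = ∑ a ∈ range m, min (L.getD a 0) k := by
    intro k
    rw [Finset.sum_congr rfl (fun j _ => aux_conj_getD hsort j), aux_sum_countP,
      aux_sum_getD_min, htake]
  have h6B : ∑ j ∈ range m, (conjList L).getD j 0 = m := by
    rw [linkA m, Finset.sum_congr rfl (fun a _ => hminm a), h6A]
  have linkB : ∀ k, ∑ a ∈ range k, L.getD a 0
      = ∑ j ∈ range m, min ((conjList L).getD j 0) k := by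
    intro k
    have e1 : ∀ j, min ((conjList L).getD j 0) k
        = (L.take k).countP (fun p => decide (j + 1 ≤ p)) := by
      intro j; rw [aux_conj_getD hsort j]; exact aux_min_countP_take hsort k j
    have e2 : (L.take k).map (fun p => min p m) = L.take k := by
      have hmp : ∀ p ∈ L.take k, min p m = p := fun p hp =>
        min_eq_left (hle_sum p (List.mem_of_mem_take hp))
      calc (L.take k).map (fun p => min p m) = (L.take k).map id := List.map_congr_left hmp
        _ = L.take k := List.map_id _
    calc ∑ a ∈ range k, L.getD a 0 = (L.take k).sum := aux_sum_getD L k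
      _ = ((L.take k).map (fun p => min p m)).sum := by rw [e2]
      _ = ∑ j ∈ range m, (L.take k).countP (fun p => decide (j + 1 ≤ p)) :=
          (aux_sum_countP _ m).symm
      _ = ∑ j ∈ range m, min ((conjList L).getD j 0) k :=
          Finset.sum_congr rfl (fun j _ => (e1 j).symm)
  intro w
  have hgt : ∀ j, (univ.filter (fun p : Fin m => pact w t p = j + 1)).card
      = (conjList L).getD j 0 := by
    intro j
    have := aux_card_filter_comp (m := m) w⁻¹ (fun p => t p = j + 1)
    simp only [pact]; convert this.trans (ht j); ext p; exact Finset.mem_filter.trans (by simp)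
  have hws : ∀ j, (univ.filter (fun p : Fin m => pact w⁻¹ s p = j + 1)).card
      = L.getD j 0 := by
    intro j
    have := aux_card_filter_comp (m := m) w (fun p => s p = j + 1)
    simpa [pact] using this.trans (hs j)
  have key1 := aux_core s (pact w t) (fun a => L.getD a 0)
    (fun j => (conjList L).getD j 0) hs hgt linkA h6A
  have key2 := aux_core t (pact w⁻¹ s) (fun j => (conjList L).getD j 0)
    (fun a => L.getD a 0) ht hws linkB h6B
  simp only [Gst, Set.mem_setOf_eq]
  rw [key1, key2]
  constructor
  · intro h q q' hqq'
    have h1 : (fun p => (s p, pact w t p)) (w q) = (fun p => (s p, pact w t p)) (w q') := by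
      simp only [pact, Prod.mk.injEq, inv_inv] at hqq' ⊢
      exact ⟨by simpa using hqq'.2, by simpa using hqq'.1⟩
    exact w.injective (h h1)
  · intro h p p' hpp'
    have h1 : (fun q => (t q, pact w⁻¹ s q)) (w⁻¹ p) = (fun q => (t q, pact w⁻¹ s q)) (w⁻¹ p') := by
      simp only [pact, Prod.mk.injEq, inv_inv] at hpp' ⊢
      exact ⟨by simpa using hpp'.2, by simpa using hpp'.1⟩
    exact w⁻¹.injective (h h1)
end
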